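/- Let A be a smooth ℂ-algebra and let μ: A ⊗_ℂ A → A be the multiplication map. For every δ ∈ Der(A, A⊗A), the composite μ∘δ: A → A is an ordinary ℂ-linear derivation of A, and the resulting linear map μ_*: Der(A, A⊗A) → Der(A, A) has kernel exactly the commutator subspace [A, Der(A, A⊗A)]; consequently μ_* induces a ℂ-linear isomorphism Der(A, A⊗A)/[A, Der(A, A⊗A)] ≅ Der(A, A). -/

import Mathlib

open TensorProduct

set_option synthInstance.maxHeartbeats 1000000

universe u

section OutDer

variable (A : Type u) [Ring A] [Algebra ℂ A]

/-- The space `Der(A, A⊗A)` of ℂ-linear derivations `A → A ⊗[ℂ] A` with respect to the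
*outer* bimodule structure on `A ⊗ A` (`a·(x⊗y)·b = ax ⊗ yb`), i.e. ℂ-linear maps with
`δ(xy) = δ(x)·(1⊗y) + (x⊗1)·δ(y)`. -/
def OutDer : Submodule ℂ (A →ₗ[ℂ] A ⊗[ℂ] A) where
  carrier := {δ | ∀ x y : A,
    δ (x * y) = δ x * ((1 : A) ⊗ₜ[ℂ] y) + (x ⊗ₜ[ℂ] (1 : A)) * δ y}
  add_mem' := by
    intro f g hf hg x y
    simp only [LinearMap.add_apply, hf x y, hg x y, add_mul, mul_add]
    abel
  zero_mem' := by
    intro x y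
    simp
  smul_mem' := by
    intro c f hf x y
    simp only [LinearMap.smul_apply, hf x y, smul_add, smul_mul_assoc, mul_smul_comm]

variable {A}

/-- The inner bimodule action `δ ↦ a·δ·b` on `Der(A, A⊗A)` (coming from the inner
bimodule structure `a·(x⊗y)·b = xb ⊗ ay` on `A ⊗ A`). -/
noncomputable def innerLR (a : A) (δ : ↥(OutDer A)) (b : A) : ↥(OutDer A) :=
  ⟨(LinearMap.mulLeft ℂ ((1 : A) ⊗ₜ[ℂ] a)) ∘ₗ
      (LinearMap.mulRight ℂ (b ⊗ₜ[ℂ] (1 : A))) ∘ₗ (δ : A →ₗ[ℂ] A ⊗[ℂ] A), by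
    intro x y
    have hδ := δ.2 x y
    have h1 : ((1 : A) ⊗ₜ[ℂ] y : A ⊗[ℂ] A) * (b ⊗ₜ[ℂ] (1 : A)) =
        (b ⊗ₜ[ℂ] (1 : A) : A ⊗[ℂ] A) * ((1 : A) ⊗ₜ[ℂ] y) := by
      simp [Algebra.TensorProduct.tmul_mul_tmul]
    have h2 : ((1 : A) ⊗ₜ[ℂ] a : A ⊗[ℂ] A) * (x ⊗ₜ[ℂ] (1 : A)) =
        (x ⊗ₜ[ℂ] (1 : A) : A ⊗[ℂ] A) * ((1 : A) ⊗ₜ[ℂ] a) := by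
      simp [Algebra.TensorProduct.tmul_mul_tmul]
    simp only [LinearMap.comp_apply, LinearMap.mulLeft_apply, LinearMap.mulRight_apply, hδ]
    rw [add_mul, mul_add]
    congr 1
    · rw [mul_assoc ((δ : A →ₗ[ℂ] A ⊗[ℂ] A) x), h1, ← mul_assoc ((δ : A →ₗ[ℂ] A ⊗[ℂ] A) x),
        ← mul_assoc, ← mul_assoc]
    · rw [mul_assoc (x ⊗ₜ[ℂ] (1 : A) : A ⊗[ℂ] A), ← mul_assoc ((1 : A) ⊗ₜ[ℂ] a : A ⊗[ℂ] A),
        h2, mul_assoc]⟩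

/-- The distinguished derivation `Δ_A : x ↦ x⊗1 − 1⊗x` in `Der(A, A⊗A)`. -/
noncomputable def deltaDer : ↥(OutDer A) :=
  ⟨(TensorProduct.mk ℂ A A).flip 1 - TensorProduct.mk ℂ A A 1, by
    intro x y
    simp only [LinearMap.sub_apply, LinearMap.flip_apply, TensorProduct.mk_apply]
    rw [sub_mul, mul_sub]
    simp only [Algebra.TensorProduct.tmul_mul_tmul, one_mul, mul_one]
    abel⟩

end OutDer

section InnerOneSided

variable {A : Type u} [Ring A] [Algebra ℂ A]

/-- The left inner action `δ ↦ a·δ` on `Der(A, A⊗A)`. -/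
noncomputable def innerL (a : A) (δ : ↥(OutDer A)) : ↥(OutDer A) :=
  ⟨(LinearMap.mulLeft ℂ ((1 : A) ⊗ₜ[ℂ] a)) ∘ₗ (δ : A →ₗ[ℂ] A ⊗[ℂ] A), by
    intro x y
    have hδ := δ.2 x y
    have h2 : ((1 : A) ⊗ₜ[ℂ] a : A ⊗[ℂ] A) * (x ⊗ₜ[ℂ] (1 : A)) =
        (x ⊗ₜ[ℂ] (1 : A) : A ⊗[ℂ] A) * ((1 : A) ⊗ₜ[ℂ] a) := by
      simp [Algebra.TensorProduct.tmul_mul_tmul]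
    simp only [LinearMap.comp_apply, LinearMap.mulLeft_apply, hδ]
    rw [mul_add]
    congr 1
    · rw [← mul_assoc]
    · rw [← mul_assoc, h2, mul_assoc]⟩

/-- The right inner action `δ ↦ δ·b` on `Der(A, A⊗A)`. -/
noncomputable def innerR (δ : ↥(OutDer A)) (b : A) : ↥(OutDer A) :=
  ⟨(LinearMap.mulRight ℂ (b ⊗ₜ[ℂ] (1 : A))) ∘ₗ (δ : A →ₗ[ℂ] A ⊗[ℂ] A), by
    intro x y
    have hδ := δ.2 x y
    have h1 : ((1 : A) ⊗ₜ[ℂ] y : A ⊗[ℂ] A) * (b ⊗ₜ[ℂ] (1 : A)) =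
        (b ⊗ₜ[ℂ] (1 : A) : A ⊗[ℂ] A) * ((1 : A) ⊗ₜ[ℂ] y) := by
      simp [Algebra.TensorProduct.tmul_mul_tmul]
    simp only [LinearMap.comp_apply, LinearMap.mulRight_apply, hδ]
    rw [add_mul]
    congr 1
    · rw [mul_assoc, h1, ← mul_assoc]
    · rw [mul_assoc]⟩

end InnerOneSided




section Smooth

variable (B : Type u) [Ring B] [Algebra ℂ B]

/-- `B` as a module over its enveloping algebra `B^e = B ⊗[ℂ] Bᵐᵒᵖ`
(the action `(b₁ ⊗ b₂ᵒᵖ) • x = b₁ * x * b₂`). -/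
noncomputable instance envModule : Module (B ⊗[ℂ] Bᵐᵒᵖ) B :=
  TensorProduct.Algebra.module

/-- `Ω¹B`: the kernel of the multiplication map `B ⊗[ℂ] B → B`, viewed as a module over
the enveloping algebra `B^e = B ⊗[ℂ] Bᵐᵒᵖ` via the outer bimodule structure.  (Here
`B ⊗[ℂ] B` with the outer `B^e`-action is canonically identified with the left regular
module `B^e`, under which the multiplication map becomes `ξ ↦ ξ • 1`.) -/
noncomputable def Omega1 : Submodule (B ⊗[ℂ] Bᵐᵒᵖ) (B ⊗[ℂ] Bᵐᵒᵖ) :=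
  LinearMap.ker (LinearMap.toSpanSingleton (B ⊗[ℂ] Bᵐᵒᵖ) B 1)

/-- A ℂ-algebra `B` is *smooth* if it is finitely generated as a ℂ-algebra and
`Ω¹B` is a finitely generated projective module over `B^e = B ⊗[ℂ] Bᵐᵒᵖ`. -/
def IsSmoothAlgebra : Prop :=
  Algebra.FiniteType ℂ B ∧ Module.Finite (B ⊗[ℂ] Bᵐᵒᵖ) (Omega1 B) ∧
    Module.Projective (B ⊗[ℂ] Bᵐᵒᵖ) (Omega1 B)

end Smooth

/-- The map `μ_* : Der(A, A⊗A) → (A →ₗ A)` obtained by composing derivations with the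
multiplication map `μ : A ⊗[ℂ] A → A`. -/
noncomputable def muStar (A : Type u) [Ring A] [Algebra ℂ A] :
    ↥(OutDer A) →ₗ[ℂ] (A →ₗ[ℂ] A) :=
  (LinearMap.llcomp ℂ A (A ⊗[ℂ] A) A (LinearMap.mul' ℂ A)).comp (OutDer A).subtype

section Aux

variable {A : Type u} [Ring A] [Algebra ℂ A]

/-- The canonical ℂ-linear iso `A ⊗ A ≃ A ⊗ Aᵐᵒᵖ`. -/
noncomputable def tau : A ⊗[ℂ] A ≃ₗ[ℂ] A ⊗[ℂ] Aᵐᵒᵖ :=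
  TensorProduct.congr (LinearEquiv.refl ℂ A) (MulOpposite.opLinearEquiv ℂ)

@[simp] lemma tau_tmul (p q : A) : tau (p ⊗ₜ[ℂ] q) = p ⊗ₜ[ℂ] (MulOpposite.op q) := rfl

/-- `π : A^e → A`, `ξ ↦ ξ • 1`. -/
noncomputable def piE : A ⊗[ℂ] Aᵐᵒᵖ →ₗ[A ⊗[ℂ] Aᵐᵒᵖ] A :=
  LinearMap.toSpanSingleton (A ⊗[ℂ] Aᵐᵒᵖ) A 1

@[simp] lemma piE_tmul (a b : A) : piE (a ⊗ₜ[ℂ] (MulOpposite.op b)) = a * b := by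
  show (a ⊗ₜ[ℂ] (MulOpposite.op b)) • (1 : A) = a * b
  rw [TensorProduct.Algebra.smul_def, op_smul_eq_mul]
  simp [smul_eq_mul]

lemma piE_tau (u : A ⊗[ℂ] A) : piE (tau u) = LinearMap.mul' ℂ A u := by
  induction u using TensorProduct.induction_on with
  | zero => simp
  | tmul p q => simp
  | add u v hu hv => simp [map_add, hu, hv]

lemma tau_mul_right (u : A ⊗[ℂ] A) (y : A) :
    tau (u * ((1 : A) ⊗ₜ[ℂ] y)) = ((1 : A) ⊗ₜ[ℂ] (MulOpposite.op y)) * tau u := by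
  induction u using TensorProduct.induction_on with
  | zero => simp
  | tmul p q => simp [Algebra.TensorProduct.tmul_mul_tmul, ← MulOpposite.op_mul]
  | add u v hu hv => simp [add_mul, mul_add, hu, hv]

lemma tau_mul_left (u : A ⊗[ℂ] A) (x : A) :
    tau ((x ⊗ₜ[ℂ] (1 : A)) * u) = (x ⊗ₜ[ℂ] (1 : Aᵐᵒᵖ)) * tau u := by
  induction u using TensorProduct.induction_on with
  | zero => simp
  | tmul p q => simp [Algebra.TensorProduct.tmul_mul_tmul]
  | add u v hu hv => simp [add_mul, mul_add, hu, hv]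

end Aux
section Aux2

variable {A : Type u} [Ring A] [Algebra ℂ A]

/-- The universal derivation `x ↦ 1 ⊗ xᵒᵖ − x ⊗ 1`. -/
noncomputable def duE : A →ₗ[ℂ] A ⊗[ℂ] Aᵐᵒᵖ :=
  (TensorProduct.mk ℂ A Aᵐᵒᵖ 1) ∘ₗ (MulOpposite.opLinearEquiv ℂ).toLinearMap
    - (TensorProduct.mk ℂ A Aᵐᵒᵖ).flip 1

lemma duE_apply (x : A) :
    duE x = (1 : A) ⊗ₜ[ℂ] (MulOpposite.op x) - x ⊗ₜ[ℂ] (1 : Aᵐᵒᵖ) := rfl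

lemma mem_omega_iff (ξ : A ⊗[ℂ] Aᵐᵒᵖ) : ξ ∈ Omega1 A ↔ piE ξ = 0 := Iff.rfl

lemma duE_mem (x : A) : duE x ∈ Omega1 A := by
  rw [mem_omega_iff, duE_apply, map_sub]
  have h1 : (1 : Aᵐᵒᵖ) = MulOpposite.op (1 : A) := rfl
  rw [h1, piE_tmul, piE_tmul, one_mul, mul_one, sub_self]

lemma duE_leibniz (x y : A) :
    duE (x * y) = ((1 : A) ⊗ₜ[ℂ] (MulOpposite.op y)) * duE x
      + (x ⊗ₜ[ℂ] (1 : Aᵐᵒᵖ)) * duE y := by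
  simp only [duE_apply, mul_sub, Algebra.TensorProduct.tmul_mul_tmul,
    one_mul, mul_one, ← MulOpposite.op_mul]
  abel

noncomputable def duOmega (x : A) : ↥(Omega1 A) := ⟨duE x, duE_mem x⟩

lemma duOmega_leibniz (x y : A) :
    duOmega (x * y) = ((1 : A) ⊗ₜ[ℂ] (MulOpposite.op y)) • duOmega x
      + (x ⊗ₜ[ℂ] (1 : Aᵐᵒᵖ)) • duOmega y := by
  apply Subtype.ext
  simp only [duOmega, Submodule.coe_add, Submodule.coe_smul, smul_eq_mul]
  exact duE_leibniz x y

/-- Any `E`-linear functional on `Ω¹` gives rise to an element of `Der(A, A⊗A)`. -/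
noncomputable def derOfFun (h : ↥(Omega1 A) →ₗ[A ⊗[ℂ] Aᵐᵒᵖ] A ⊗[ℂ] Aᵐᵒᵖ) :
    A →ₗ[ℂ] A ⊗[ℂ] A where
  toFun x := tau.symm (h (duOmega x))
  map_add' x y := by
    show tau.symm (h (duOmega (x + y))) = tau.symm (h (duOmega x)) + tau.symm (h (duOmega y))
    have : duOmega (x + y) = duOmega x + duOmega y := Subtype.ext (by simp [duOmega])
    rw [this, map_add, map_add]
  map_smul' c x := by
    show tau.symm (h (duOmega (c • x))) = (RingHom.id ℂ) c • tau.symm (h (duOmega x))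
    have : duOmega (c • x) = (algebraMap ℂ (A ⊗[ℂ] Aᵐᵒᵖ) c) • duOmega x := by
      apply Subtype.ext
      rw [Submodule.coe_smul]
      show duE (c • x) = algebraMap ℂ (A ⊗[ℂ] Aᵐᵒᵖ) c • duE x
      rw [map_smul, algebraMap_smul]
    rw [this, map_smul, algebraMap_smul, map_smul]
    rfl

lemma tau_derOfFun (h : ↥(Omega1 A) →ₗ[A ⊗[ℂ] Aᵐᵒᵖ] A ⊗[ℂ] Aᵐᵒᵖ) (x : A) :
    tau (derOfFun h x) = h (duOmega x) := by
  simp [derOfFun]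

lemma derOfFun_mem (h : ↥(Omega1 A) →ₗ[A ⊗[ℂ] Aᵐᵒᵖ] A ⊗[ℂ] Aᵐᵒᵖ) :
    derOfFun h ∈ OutDer A := by
  intro x y
  apply tau.injective
  rw [map_add, tau_mul_right, tau_mul_left, tau_derOfFun, tau_derOfFun, tau_derOfFun,
    duOmega_leibniz, map_add, map_smul, map_smul, smul_eq_mul, smul_eq_mul]

lemma mu_derOfFun (h : ↥(Omega1 A) →ₗ[A ⊗[ℂ] Aᵐᵒᵖ] A ⊗[ℂ] Aᵐᵒᵖ) (x : A) :
    LinearMap.mul' ℂ A (derOfFun h x) = piE (h (duOmega x)) := by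
  rw [← piE_tau, tau_derOfFun]

end Aux2
section Aux3

variable {A : Type u} [Ring A] [Algebra ℂ A]

lemma tau_lmul_inner (u : A ⊗[ℂ] A) (a : A) :
    tau (((1 : A) ⊗ₜ[ℂ] a) * u) = tau u * ((1 : A) ⊗ₜ[ℂ] (MulOpposite.op a)) := by
  induction u using TensorProduct.induction_on with
  | zero => simp
  | tmul p q => simp [Algebra.TensorProduct.tmul_mul_tmul, ← MulOpposite.op_mul]
  | add u v hu hv => simp [mul_add, add_mul, hu, hv]

lemma tau_rmul_inner (u : A ⊗[ℂ] A) (a : A) :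
    tau (u * (a ⊗ₜ[ℂ] (1 : A))) = tau u * (a ⊗ₜ[ℂ] (1 : Aᵐᵒᵖ)) := by
  induction u using TensorProduct.induction_on with
  | zero => simp
  | tmul p q => simp [Algebra.TensorProduct.tmul_mul_tmul]
  | add u v hu hv => simp [mul_add, add_mul, hu, hv]

/-- Right multiplication (in `A^e`) of a derivation by an element of `A^e`. -/
noncomputable def rmulFun (δ : ↥(OutDer A)) (q : A ⊗[ℂ] Aᵐᵒᵖ) : A →ₗ[ℂ] A ⊗[ℂ] A :=
  tau.symm.toLinearMap ∘ₗ (LinearMap.mulRight ℂ q) ∘ₗ tau.toLinearMap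
    ∘ₗ (δ : A →ₗ[ℂ] A ⊗[ℂ] A)

lemma rmulFun_apply (δ : ↥(OutDer A)) (q : A ⊗[ℂ] Aᵐᵒᵖ) (x : A) :
    rmulFun δ q x = tau.symm (tau ((δ : A →ₗ[ℂ] A ⊗[ℂ] A) x) * q) := rfl

lemma rmulFun_mem (δ : ↥(OutDer A)) (q : A ⊗[ℂ] Aᵐᵒᵖ) : rmulFun δ q ∈ OutDer A := by
  intro x y
  apply tau.injective
  rw [map_add, tau_mul_right, tau_mul_left, rmulFun_apply, rmulFun_apply, rmulFun_apply,
    LinearEquiv.apply_symm_apply, LinearEquiv.apply_symm_apply, LinearEquiv.apply_symm_apply,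
    δ.2 x y, map_add, tau_mul_right, tau_mul_left, add_mul, mul_assoc, mul_assoc]

noncomputable def rmul (δ : ↥(OutDer A)) (q : A ⊗[ℂ] Aᵐᵒᵖ) : ↥(OutDer A) :=
  ⟨rmulFun δ q, rmulFun_mem δ q⟩

lemma rmul_coe_apply (δ : ↥(OutDer A)) (q : A ⊗[ℂ] Aᵐᵒᵖ) (x : A) :
    ((rmul δ q : ↥(OutDer A)) : A →ₗ[ℂ] A ⊗[ℂ] A) x
      = tau.symm (tau ((δ : A →ₗ[ℂ] A ⊗[ℂ] A) x) * q) := rfl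

lemma rmul_mul (δ : ↥(OutDer A)) (q q' : A ⊗[ℂ] Aᵐᵒᵖ) :
    rmul δ (q * q') = rmul (rmul δ q) q' := by
  apply Subtype.ext; apply LinearMap.ext; intro x
  rw [rmul_coe_apply, rmul_coe_apply, rmul_coe_apply, LinearEquiv.apply_symm_apply, mul_assoc]

lemma rmul_zero (δ : ↥(OutDer A)) : rmul δ 0 = 0 := by
  apply Subtype.ext; apply LinearMap.ext; intro x
  rw [rmul_coe_apply, mul_zero, map_zero]; rfl

lemma rmul_add (δ : ↥(OutDer A)) (q q' : A ⊗[ℂ] Aᵐᵒᵖ) :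
    rmul δ (q + q') = rmul δ q + rmul δ q' := by
  apply Subtype.ext; apply LinearMap.ext; intro x
  have h1 : ((rmul δ (q + q') : ↥(OutDer A)) : A →ₗ[ℂ] A ⊗[ℂ] A) x
      = tau.symm (tau ((δ : A →ₗ[ℂ] A ⊗[ℂ] A) x) * (q + q')) := rfl
  have h2 : ((rmul δ q + rmul δ q' : ↥(OutDer A)) : A →ₗ[ℂ] A ⊗[ℂ] A) x
      = tau.symm (tau ((δ : A →ₗ[ℂ] A ⊗[ℂ] A) x) * q)
        + tau.symm (tau ((δ : A →ₗ[ℂ] A ⊗[ℂ] A) x) * q') := rfl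
  rw [h1, h2, mul_add, map_add]

lemma rmul_smul (δ : ↥(OutDer A)) (c : ℂ) (q : A ⊗[ℂ] Aᵐᵒᵖ) :
    rmul δ (c • q) = c • rmul δ q := by
  apply Subtype.ext; apply LinearMap.ext; intro x
  have h1 : ((rmul δ (c • q) : ↥(OutDer A)) : A →ₗ[ℂ] A ⊗[ℂ] A) x
      = tau.symm (tau ((δ : A →ₗ[ℂ] A ⊗[ℂ] A) x) * (c • q)) := rfl
  have h2 : ((c • rmul δ q : ↥(OutDer A)) : A →ₗ[ℂ] A ⊗[ℂ] A) x
      = c • tau.symm (tau ((δ : A →ₗ[ℂ] A ⊗[ℂ] A) x) * q) := rfl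
  rw [h1, h2, mul_smul_comm, map_smul]

lemma rmul_duE (δ : ↥(OutDer A)) (a : A) :
    rmul δ (duE a) = innerL a δ - innerR δ a := by
  apply Subtype.ext; apply LinearMap.ext; intro x
  rw [rmul_coe_apply]
  apply tau.injective
  rw [LinearEquiv.apply_symm_apply]
  show tau ((δ : A →ₗ[ℂ] A ⊗[ℂ] A) x) * duE a
    = tau (((innerL a δ - innerR δ a : ↥(OutDer A)) : A →ₗ[ℂ] A ⊗[ℂ] A) x)
  have hc : ((innerL a δ - innerR δ a : ↥(OutDer A)) : A →ₗ[ℂ] A ⊗[ℂ] A) x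
      = ((1 : A) ⊗ₜ[ℂ] a) * (δ : A →ₗ[ℂ] A ⊗[ℂ] A) x
        - ((δ : A →ₗ[ℂ] A ⊗[ℂ] A) x) * (a ⊗ₜ[ℂ] (1 : A)) := rfl
  rw [hc, map_sub, tau_lmul_inner, tau_rmul_inner, duE_apply, mul_sub]

end Aux3
section Aux4

variable {A : Type u} [Ring A] [Algebra ℂ A]

/-- Generators of `Ω¹` as a ℂ-span: `(c ⊗ eᵒᵖ)·du(a)`. -/
def genSet (A : Type u) [Ring A] [Algebra ℂ A] : Set (A ⊗[ℂ] Aᵐᵒᵖ) :=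
  {w | ∃ (c e a : A), w = (c ⊗ₜ[ℂ] MulOpposite.op e) * duE a}

lemma piE_tmul' (a : A) (b : Aᵐᵒᵖ) : piE (a ⊗ₜ[ℂ] b) = a * b.unop := piE_tmul a b.unop

lemma tmul_one_mul_duE (a x : A) :
    (a ⊗ₜ[ℂ] MulOpposite.op (1 : A)) * duE x
      = a ⊗ₜ[ℂ] MulOpposite.op x - (a * x) ⊗ₜ[ℂ] (1 : Aᵐᵒᵖ) := by
  rw [duE_apply, mul_sub]
  simp [Algebra.TensorProduct.tmul_mul_tmul]

lemma sub_pi_mem_span (ξ : A ⊗[ℂ] Aᵐᵒᵖ) :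
    ξ - (piE ξ) ⊗ₜ[ℂ] (1 : Aᵐᵒᵖ) ∈ Submodule.span ℂ (genSet A) := by
  induction ξ using TensorProduct.induction_on with
  | zero => simp
  | tmul a b =>
    have key : (a ⊗ₜ[ℂ] b) - (piE (a ⊗ₜ[ℂ] b)) ⊗ₜ[ℂ] (1 : Aᵐᵒᵖ)
        = (a ⊗ₜ[ℂ] MulOpposite.op (1 : A)) * duE b.unop := by
      rw [tmul_one_mul_duE, MulOpposite.op_unop, piE_tmul']
    rw [key]
    exact Submodule.subset_span ⟨a, 1, b.unop, rfl⟩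
  | add u v hu hv =>
    have : (u + v) - (piE (u + v)) ⊗ₜ[ℂ] (1 : Aᵐᵒᵖ)
        = (u - (piE u) ⊗ₜ[ℂ] (1 : Aᵐᵒᵖ)) + (v - (piE v) ⊗ₜ[ℂ] (1 : Aᵐᵒᵖ)) := by
      rw [map_add, TensorProduct.add_tmul]; abel
    rw [this]
    exact Submodule.add_mem _ hu hv

lemma omega_le_span {ξ : A ⊗[ℂ] Aᵐᵒᵖ} (h : piE ξ = 0) :
    ξ ∈ Submodule.span ℂ (genSet A) := by
  have := sub_pi_mem_span ξ
  rwa [h, TensorProduct.zero_tmul, sub_zero] at this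

lemma rmul_mem_comm (δ : ↥(OutDer A)) {q : A ⊗[ℂ] Aᵐᵒᵖ} (hq : piE q = 0) :
    rmul δ q ∈ Submodule.span ℂ
      {d : ↥(OutDer A) | ∃ (a : A) (δ' : ↥(OutDer A)), d = innerL a δ' - innerR δ' a} := by
  have hq' : q ∈ Submodule.span ℂ (genSet A) := omega_le_span hq
  clear hq
  induction hq' using Submodule.span_induction with
  | mem w hw =>
    obtain ⟨c, e, a, rfl⟩ := hw
    rw [rmul_mul, rmul_duE]
    exact Submodule.subset_span ⟨a, rmul δ (c ⊗ₜ[ℂ] MulOpposite.op e), rfl⟩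
  | zero => rw [rmul_zero]; exact Submodule.zero_mem _
  | add u v _ _ hu hv => rw [rmul_add]; exact Submodule.add_mem _ hu hv
  | smul c u _ hu => rw [rmul_smul]; exact Submodule.smul_mem _ c hu

lemma mu_mul_right (u : A ⊗[ℂ] A) (y : A) :
    LinearMap.mul' ℂ A (u * ((1 : A) ⊗ₜ[ℂ] y)) = LinearMap.mul' ℂ A u * y := by
  induction u using TensorProduct.induction_on with
  | zero => simp
  | tmul p q => simp [Algebra.TensorProduct.tmul_mul_tmul, mul_assoc]
  | add u v hu hv => simp [add_mul, hu, hv]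

lemma mu_mul_left (u : A ⊗[ℂ] A) (x : A) :
    LinearMap.mul' ℂ A ((x ⊗ₜ[ℂ] (1 : A)) * u) = x * LinearMap.mul' ℂ A u := by
  induction u using TensorProduct.induction_on with
  | zero => simp
  | tmul p q => simp [Algebra.TensorProduct.tmul_mul_tmul, mul_assoc]
  | add u v hu hv => simp [mul_add, hu, hv]

lemma mu_inner_eq (u : A ⊗[ℂ] A) (a : A) :
    LinearMap.mul' ℂ A (((1 : A) ⊗ₜ[ℂ] a) * u) = LinearMap.mul' ℂ A (u * (a ⊗ₜ[ℂ] (1 : A))) := by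
  induction u using TensorProduct.induction_on with
  | zero => simp
  | tmul p q => simp [Algebra.TensorProduct.tmul_mul_tmul, mul_assoc]
  | add u v hu hv => simp [mul_add, add_mul, hu, hv]

end Aux4
section Aux5

variable {A : Type u} [Ring A] [Algebra ℂ A]

lemma piE_surj : Function.Surjective (piE (A := A)) := fun a =>
  ⟨a ⊗ₜ[ℂ] MulOpposite.op 1, by rw [piE_tmul, mul_one]⟩

lemma muStar_apply (δ : ↥(OutDer A)) (x : A) :
    muStar A δ x = LinearMap.mul' ℂ A ((δ : A →ₗ[ℂ] A ⊗[ℂ] A) x) := rfl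

/-- `Φ_d : A^e → A`, `a ⊗ bᵒᵖ ↦ a · d(b)`. -/
noncomputable def Phi (d : A →ₗ[ℂ] A) : A ⊗[ℂ] Aᵐᵒᵖ →ₗ[ℂ] A :=
  (LinearMap.mul' ℂ A) ∘ₗ (TensorProduct.map LinearMap.id
    (d ∘ₗ (MulOpposite.opLinearEquiv ℂ (M := A)).symm.toLinearMap))

lemma Phi_tmul (d : A →ₗ[ℂ] A) (a : A) (b : Aᵐᵒᵖ) :
    Phi d (a ⊗ₜ[ℂ] b) = a * d b.unop := by
  simp [Phi]

lemma Phi_mul (d : A →ₗ[ℂ] A) (hd : ∀ x y : A, d (x * y) = d x * y + x * d y)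
    (η ξ : A ⊗[ℂ] Aᵐᵒᵖ) :
    Phi d (η * ξ) = η • Phi d ξ + Phi d (η * ((piE ξ) ⊗ₜ[ℂ] (1 : Aᵐᵒᵖ))) := by
  induction ξ using TensorProduct.induction_on with
  | zero => simp
  | tmul a b =>
    induction η using TensorProduct.induction_on with
    | zero => simp; exact (zero_smul (A ⊗[ℂ] Aᵐᵒᵖ) (Phi d (a ⊗ₜ[ℂ] b))).symm
    | tmul c e =>
      simp only [Algebra.TensorProduct.tmul_mul_tmul, Phi_tmul, piE_tmul',
        TensorProduct.Algebra.smul_def, MulOpposite.smul_eq_mul_unop, smul_eq_mul,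
        MulOpposite.unop_mul, MulOpposite.unop_op, MulOpposite.unop_one, mul_one,
        hd b.unop e.unop]
      noncomm_ring
    | add η η' h1 h2 =>
      rw [add_mul, map_add, h1, h2, add_mul, map_add, add_smul]
      abel
  | add u v hu hv =>
    simp only [mul_add, map_add, TensorProduct.add_tmul, smul_add, hu, hv]
    abel

lemma Phi_smul_omega (d : A →ₗ[ℂ] A) (hd : ∀ x y : A, d (x * y) = d x * y + x * d y)
    (η : A ⊗[ℂ] Aᵐᵒᵖ) (p : ↥(Omega1 A)) :
    Phi d (η * ↑p) = η • Phi d ↑p := by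
  have h0 : piE (p : A ⊗[ℂ] Aᵐᵒᵖ) = 0 := p.2
  rw [Phi_mul d hd η p, h0, TensorProduct.zero_tmul, mul_zero, map_zero, add_zero]

/-- `Φ_d` restricted to `Ω¹` is `A^e`-linear. -/
noncomputable def PhiRes (d : A →ₗ[ℂ] A)
    (hd : ∀ x y : A, d (x * y) = d x * y + x * d y) :
    ↥(Omega1 A) →ₗ[A ⊗[ℂ] Aᵐᵒᵖ] A where
  toFun p := Phi d ↑p
  map_add' p q := by simp
  map_smul' η p := by
    show Phi d ↑(η • p) = η • Phi d ↑p
    rw [Submodule.coe_smul, smul_eq_mul, Phi_smul_omega d hd]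

end Aux5
section Aux6

variable {A : Type u} [Ring A] [Algebra ℂ A]

lemma outDer_one (δ : ↥(OutDer A)) : (δ : A →ₗ[ℂ] A ⊗[ℂ] A) 1 = 0 := by
  have h := δ.2 1 1
  rw [mul_one] at h
  have h1 : ((1 : A) ⊗ₜ[ℂ] (1 : A) : A ⊗[ℂ] A) = 1 := rfl
  rw [h1, mul_one, one_mul] at h
  have := congrArg (fun u => u - (δ : A →ₗ[ℂ] A ⊗[ℂ] A) 1) h
  simpa using this.symm

/-- `G_δ : A^e → A^e`, `a ⊗ bᵒᵖ ↦ (a ⊗ 1) · τ(δ(b))`. -/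
noncomputable def Gmap (δ : ↥(OutDer A)) : A ⊗[ℂ] Aᵐᵒᵖ →ₗ[ℂ] A ⊗[ℂ] Aᵐᵒᵖ :=
  TensorProduct.lift
    (((LinearMap.mul ℂ (A ⊗[ℂ] Aᵐᵒᵖ)).comp
        ((TensorProduct.mk ℂ A Aᵐᵒᵖ).flip 1)).compl₂
      (tau.toLinearMap ∘ₗ (δ : A →ₗ[ℂ] A ⊗[ℂ] A)
        ∘ₗ (MulOpposite.opLinearEquiv ℂ (M := A)).symm.toLinearMap))

lemma Gmap_tmul (δ : ↥(OutDer A)) (a : A) (b : Aᵐᵒᵖ) :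
    Gmap δ (a ⊗ₜ[ℂ] b) = (a ⊗ₜ[ℂ] (1 : Aᵐᵒᵖ)) * tau ((δ : A →ₗ[ℂ] A ⊗[ℂ] A) b.unop) := by
  simp [Gmap]

lemma Gmap_mul (δ : ↥(OutDer A)) (η ξ : A ⊗[ℂ] Aᵐᵒᵖ) :
    Gmap δ (η * ξ) = η * Gmap δ ξ + Gmap δ (η * ((piE ξ) ⊗ₜ[ℂ] (1 : Aᵐᵒᵖ))) := by
  induction ξ using TensorProduct.induction_on with
  | zero => simp
  | tmul a b =>
    induction η using TensorProduct.induction_on with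
    | zero => simp
    | tmul c e =>
      simp only [Algebra.TensorProduct.tmul_mul_tmul, Gmap_tmul, piE_tmul',
        MulOpposite.unop_mul, MulOpposite.unop_op, MulOpposite.unop_one, mul_one,
        δ.2 b.unop e.unop, map_add, tau_mul_right, tau_mul_left]
      rw [mul_add]
      congr 1
      · rw [← mul_assoc, ← mul_assoc, Algebra.TensorProduct.tmul_mul_tmul,
          Algebra.TensorProduct.tmul_mul_tmul, mul_one, mul_one, one_mul, MulOpposite.op_unop]
      · rw [← mul_assoc, Algebra.TensorProduct.tmul_mul_tmul, one_mul, mul_assoc]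
    | add η η' h1 h2 =>
      simp only [add_mul, map_add, h1, h2]
      abel
  | add u v hu hv =>
    simp only [mul_add, map_add, TensorProduct.add_tmul, hu, hv]
    abel

lemma piE_Gmap (δ : ↥(OutDer A)) (hδ : ∀ x : A, LinearMap.mul' ℂ A ((δ : A →ₗ[ℂ] A ⊗[ℂ] A) x) = 0)
    (ξ : A ⊗[ℂ] Aᵐᵒᵖ) : piE (Gmap δ ξ) = 0 := by
  induction ξ using TensorProduct.induction_on with
  | zero => simp
  | tmul a b =>
    rw [Gmap_tmul]
    have : (a ⊗ₜ[ℂ] (1 : Aᵐᵒᵖ)) * tau ((δ : A →ₗ[ℂ] A ⊗[ℂ] A) b.unop)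
        = (a ⊗ₜ[ℂ] (1 : Aᵐᵒᵖ)) • tau ((δ : A →ₗ[ℂ] A ⊗[ℂ] A) b.unop) := rfl
    rw [this, map_smul, piE_tau, hδ, smul_zero]
  | add u v hu hv => rw [map_add, map_add, hu, hv, add_zero]

lemma Gmap_duE (δ : ↥(OutDer A)) (x : A) :
    Gmap δ (duE x) = tau ((δ : A →ₗ[ℂ] A ⊗[ℂ] A) x) := by
  rw [duE_apply, map_sub, Gmap_tmul, Gmap_tmul]
  have h1 : (MulOpposite.op x).unop = x := rfl
  have h2 : ((1 : Aᵐᵒᵖ)).unop = (1 : A) := rfl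
  rw [h1, h2, outDer_one, map_zero, mul_zero, sub_zero]
  have h3 : ((1 : A) ⊗ₜ[ℂ] (1 : Aᵐᵒᵖ) : A ⊗[ℂ] Aᵐᵒᵖ) = 1 := rfl
  rw [h3, one_mul]

set_option maxHeartbeats 1000000 in
/-- `G_δ` restricted to `Ω¹` is `A^e`-linear (when `μ∘δ = 0`). -/
noncomputable def GRes (δ : ↥(OutDer A))
    (hδ : ∀ x : A, LinearMap.mul' ℂ A ((δ : A →ₗ[ℂ] A ⊗[ℂ] A) x) = 0) :
    ↥(Omega1 A) →ₗ[A ⊗[ℂ] Aᵐᵒᵖ] A ⊗[ℂ] Aᵐᵒᵖ where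
  toFun p := Gmap δ ↑p
  map_add' p q := by simp
  map_smul' η p := by
    show Gmap δ ↑(η • p) = η • Gmap δ ↑p
    have h0 : piE (p : A ⊗[ℂ] Aᵐᵒᵖ) = 0 := p.2
    rw [Submodule.coe_smul, smul_eq_mul, Gmap_mul δ η p, h0, TensorProduct.zero_tmul,
      mul_zero, map_zero, add_zero, smul_eq_mul]

end Aux6

set_option maxHeartbeats 4000000 in
/-- Let `A` be a smooth ℂ-algebra and `μ : A ⊗[ℂ] A → A` the
multiplication map.  For every `δ ∈ Der(A, A⊗A)` the composite `μ∘δ` is an ordinary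
derivation of `A`; the resulting linear map `μ_* : Der(A, A⊗A) → Der(A, A)` has kernel
exactly the commutator subspace `[A, Der(A, A⊗A)]` and has image the space of all
derivations of `A`; consequently `μ_*` induces an isomorphism
`Der(A, A⊗A)/[A, Der(A, A⊗A)] ≅ Der(A, A)`. -/
theorem stmt4 (A : Type u) [Ring A] [Algebra ℂ A] (hA : IsSmoothAlgebra A) :
    (∀ (δ : ↥(OutDer A)) (x y : A),
        LinearMap.mul' ℂ A ((δ : A →ₗ[ℂ] A ⊗[ℂ] A) (x * y)) =
          LinearMap.mul' ℂ A ((δ : A →ₗ[ℂ] A ⊗[ℂ] A) x) * y +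
            x * LinearMap.mul' ℂ A ((δ : A →ₗ[ℂ] A ⊗[ℂ] A) y)) ∧
    LinearMap.ker (muStar A) = Submodule.span ℂ
      {d : ↥(OutDer A) | ∃ (a : A) (δ : ↥(OutDer A)), d = innerL a δ - innerR δ a} ∧
    Set.range (muStar A) =
      {d : A →ₗ[ℂ] A | ∀ x y : A, d (x * y) = d x * y + x * d y} := by
  obtain ⟨-, hfin, hproj⟩ := hA
  haveI := hfin
  haveI := hproj
  -- Part 1 : μ ∘ δ is a derivation
  have part1 : ∀ (δ : ↥(OutDer A)) (x y : A),
      LinearMap.mul' ℂ A ((δ : A →ₗ[ℂ] A ⊗[ℂ] A) (x * y)) =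
        LinearMap.mul' ℂ A ((δ : A →ₗ[ℂ] A ⊗[ℂ] A) x) * y +
          x * LinearMap.mul' ℂ A ((δ : A →ₗ[ℂ] A ⊗[ℂ] A) y) := by
    intro δ x y
    rw [δ.2 x y, map_add, mu_mul_right, mu_mul_left]
  -- commutators are killed by μ_*
  have comm_ker : ∀ (a : A) (δ : ↥(OutDer A)),
      muStar A (innerL a δ - innerR δ a) = 0 := by
    intro a δ
    apply LinearMap.ext; intro x
    have h0 : muStar A (innerL a δ - innerR δ a) x
        = LinearMap.mul' ℂ A (((1 : A) ⊗ₜ[ℂ] a) * (δ : A →ₗ[ℂ] A ⊗[ℂ] A) x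
            - ((δ : A →ₗ[ℂ] A ⊗[ℂ] A) x) * (a ⊗ₜ[ℂ] (1 : A))) := rfl
    rw [h0, map_sub, mu_inner_eq, sub_self]
    rfl
  -- surjectivity of μ_* onto derivations
  have surj : ∀ d : A →ₗ[ℂ] A, (∀ x y : A, d (x * y) = d x * y + x * d y) →
      ∃ δ : ↥(OutDer A), muStar A δ = d := by
    intro d hd
    obtain ⟨ψ, hψ⟩ := Module.projective_lifting_property piE (PhiRes d hd) piE_surj
    refine ⟨⟨derOfFun ψ, derOfFun_mem ψ⟩, ?_⟩
    apply LinearMap.ext; intro x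
    have h1 : muStar A ⟨derOfFun ψ, derOfFun_mem ψ⟩ x
        = LinearMap.mul' ℂ A (derOfFun ψ x) := rfl
    rw [h1, mu_derOfFun]
    have h2 : piE (ψ (duOmega x)) = PhiRes d hd (duOmega x) := by
      rw [← hψ]; rfl
    rw [h2]
    show Phi d (duE x) = d x
    rw [duE_apply, map_sub, Phi_tmul, Phi_tmul]
    have hd1 : d 1 = 0 := by
      have h := hd 1 1
      rw [one_mul, mul_one, one_mul] at h
      exact (left_eq_add.mp h)
    show (1 : A) * d x - x * d (1 : Aᵐᵒᵖ).unop = d x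
    have : ((1 : Aᵐᵒᵖ)).unop = (1 : A) := rfl
    rw [this, hd1, mul_zero, sub_zero, one_mul]
  -- kernel is contained in the commutator span
  have ker_le : LinearMap.ker (muStar A) ≤ Submodule.span ℂ
      {d : ↥(OutDer A) | ∃ (a : A) (δ : ↥(OutDer A)), d = innerL a δ - innerR δ a} := by
    intro δ hδker
    have hδ : ∀ x : A, LinearMap.mul' ℂ A ((δ : A →ₗ[ℂ] A ⊗[ℂ] A) x) = 0 := by
      intro x
      have := LinearMap.congr_fun (LinearMap.mem_ker.mp hδker) x
      rw [muStar_apply] at this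
      exact this
    obtain ⟨n, f, hf⟩ := Module.Finite.exists_fin' (A ⊗[ℂ] Aᵐᵒᵖ) ↥(Omega1 A)
    obtain ⟨σ, hσ⟩ := Module.projective_lifting_property f LinearMap.id hf
    set q : Fin n → ↥(Omega1 A) := fun j => f (Pi.single j 1) with hq
    have hfact : ∀ p : ↥(Omega1 A),
        Gmap δ ↑p = ∑ j, (σ p j) * Gmap δ ↑(q j) := by
      intro p
      have hp : f (σ p) = p := by
        have := LinearMap.congr_fun hσ p
        simpa using this
      have hsingle : (σ p) = ∑ j, (σ p j) • (Pi.single j (1 : A ⊗[ℂ] Aᵐᵒᵖ) : Fin n → A ⊗[ℂ] Aᵐᵒᵖ) := by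
        have h := Finset.univ_sum_single (σ p)
        conv_lhs => rw [← h]
        refine Finset.sum_congr rfl (fun j _ => ?_)
        have h2 : (Pi.single j (σ p j • (1 : A ⊗[ℂ] Aᵐᵒᵖ)) : Fin n → A ⊗[ℂ] Aᵐᵒᵖ)
            = σ p j • (Pi.single j (1 : A ⊗[ℂ] Aᵐᵒᵖ) : Fin n → A ⊗[ℂ] Aᵐᵒᵖ) :=
          Pi.single_smul' j (σ p j) (1 : A ⊗[ℂ] Aᵐᵒᵖ)
        rw [smul_eq_mul, mul_one] at h2
        exact h2
      have key : GRes δ hδ (f (σ p)) = ∑ j, (σ p j) * Gmap δ ↑(q j) := by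
        conv_lhs => rw [hsingle]
        rw [map_sum, map_sum]
        refine Finset.sum_congr rfl (fun j _ => ?_)
        rw [map_smul, map_smul, smul_eq_mul]
        rfl
      calc Gmap δ ↑p = GRes δ hδ (f (σ p)) := by rw [hp]; rfl
        _ = ∑ j, (σ p j) * Gmap δ ↑(q j) := key
    have hdelta : δ = ∑ j, rmul
        ⟨derOfFun ((LinearMap.proj j) ∘ₗ σ), derOfFun_mem ((LinearMap.proj j) ∘ₗ σ)⟩
        (Gmap δ ↑(q j)) := by
      apply Subtype.ext; apply LinearMap.ext; intro x
      have hL : (δ : A →ₗ[ℂ] A ⊗[ℂ] A) x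
          = ∑ j, tau.symm ((σ (duOmega x) j) * Gmap δ ↑(q j)) := by
        have h1 : (δ : A →ₗ[ℂ] A ⊗[ℂ] A) x
            = tau.symm (Gmap δ (duE x)) := by
          rw [Gmap_duE, LinearEquiv.symm_apply_apply]
        have h2 : Gmap δ (duE x) = ∑ j, (σ (duOmega x) j) * Gmap δ ↑(q j) :=
          hfact (duOmega x)
        rw [h1, h2, map_sum]
      rw [hL]
      have hR : ((∑ j, rmul
          ⟨derOfFun ((LinearMap.proj j) ∘ₗ σ), derOfFun_mem ((LinearMap.proj j) ∘ₗ σ)⟩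
          (Gmap δ ↑(q j)) : ↥(OutDer A)) : A →ₗ[ℂ] A ⊗[ℂ] A) x
          = ∑ j, tau.symm ((σ (duOmega x) j) * Gmap δ ↑(q j)) := by
        rw [show ((∑ j, rmul
            ⟨derOfFun ((LinearMap.proj j) ∘ₗ σ), derOfFun_mem ((LinearMap.proj j) ∘ₗ σ)⟩
            (Gmap δ ↑(q j)) : ↥(OutDer A)) : A →ₗ[ℂ] A ⊗[ℂ] A)
          = (OutDer A).subtype (∑ j, rmul
            ⟨derOfFun ((LinearMap.proj j) ∘ₗ σ), derOfFun_mem ((LinearMap.proj j) ∘ₗ σ)⟩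
            (Gmap δ ↑(q j))) from rfl, map_sum]
        rw [LinearMap.sum_apply]
        refine Finset.sum_congr rfl (fun j _ => ?_)
        have h3 : ((OutDer A).subtype (rmul
            ⟨derOfFun ((LinearMap.proj j) ∘ₗ σ), derOfFun_mem ((LinearMap.proj j) ∘ₗ σ)⟩
            (Gmap δ ↑(q j)))) x
            = tau.symm (tau (derOfFun ((LinearMap.proj j) ∘ₗ σ) x) * Gmap δ ↑(q j)) := rfl
        rw [h3, tau_derOfFun]
        rfl
      rw [hR]
    rw [hdelta]
    refine Submodule.sum_mem _ (fun j _ => ?_)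
    exact rmul_mem_comm _ (piE_Gmap δ hδ _)
  refine ⟨part1, ?_, ?_⟩
  · apply le_antisymm ker_le
    rw [Submodule.span_le]
    rintro d ⟨a, δ', rfl⟩
    exact LinearMap.mem_ker.mpr (comm_ker a δ')
  · ext d
    constructor
    · rintro ⟨δ, rfl⟩
      intro x y
      rw [muStar_apply, muStar_apply, muStar_apply]
      exact part1 δ x y
    · intro hd
      obtain ⟨δ, hδ⟩ := surj d hd
      exact ⟨δ, hδ⟩
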